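/- For all positive real numbers p, q, r, s there exists a complex number z with (p·z³ + 2q·z² + 2r·z + s)·(q·z³ + 2p·z² + 2s·z + r) = 0 and |Im z| ≥ √3·|Re z|. -/

import Mathlib

open Complex Polynomial


lemma pair_real (α β γ δ x y u : ℝ) (hα : 0 < α) (hβ : 0 < β) (hγ : 0 < γ) (hδ : 0 < δ)
    (V1 : α * (2*x + u) = -β) (V2 : α * ((x^2 + y^2) + 2*x*u) = γ)
    (V3 : α * ((x^2 + y^2) * u) = -δ) (hcone : y^2 < 3*x^2) :
    β * γ > 4 * α * δ := by
  have hx2 : 0 < x^2 := by nlinarith [sq_nonneg y]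
  have hm : 0 < x^2 + y^2 := by nlinarith [sq_nonneg y]
  have hs1 : 2*x + u < 0 := by
    by_contra hh; push_neg at hh; nlinarith [mul_nonneg hα.le hh]
  have hs2 : 0 < (x^2 + y^2) + 2*x*u := by
    by_contra hh; push_neg at hh; nlinarith [mul_nonpos_of_nonneg_of_nonpos hα.le hh]
  have hu : u < 0 := by
    by_contra hh; push_neg at hh; nlinarith [mul_nonneg (mul_nonneg hα.le hm.le) hh]
  have hx : x < 0 := by
    by_contra hh; push_neg at hh
    nlinarith [mul_nonneg hh (by linarith : (0:ℝ) ≤ -(2*x+u))]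
  have key : (2*x+u) * ((x^2+y^2) + 2*x*u) < 4 * ((x^2+y^2)*u) := by
    rcases le_or_gt (3*(-u)) (2*(-x)) with h | h
    · nlinarith [mul_nonneg (sq_nonneg y) (by linarith : (0:ℝ) ≤ 2*(-x) - 3*(-u)),
        mul_pos (mul_pos (by linarith : (0:ℝ) < -u) (by linarith : (0:ℝ) < -u)) (by linarith : (0:ℝ) < -x),
        mul_pos (mul_pos (by linarith : (0:ℝ) < -x) (by linarith : (0:ℝ) < -x)) (by linarith : (0:ℝ) < -x),
        mul_pos (by linarith : (0:ℝ) < -u) (mul_pos (by linarith : (0:ℝ) < -x) (by linarith : (0:ℝ) < -x))]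
    · nlinarith [mul_nonneg (by linarith : (0:ℝ) ≤ -x) (sq_nonneg (u - 2*x)),
        mul_pos (by linarith : (0:ℝ) < 3*x^2 - y^2) (by linarith : (0:ℝ) < 3*(-u) - 2*(-x))]
  have hβ' : β = -(α*(2*x+u)) := by linarith
  have hγ' : γ = α*((x^2+y^2) + 2*x*u) := V2.symm
  have hδ' : δ = -(α*((x^2+y^2)*u)) := by linarith
  rw [hβ', hγ', hδ']
  nlinarith [mul_pos (mul_pos hα hα) (by linarith : (0:ℝ) < 4*((x^2+y^2)*u) - (2*x+u)*((x^2+y^2)+2*x*u))]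

lemma triple_real (α β γ δ x1 x2 x3 : ℝ) (hα : 0 < α) (hβ : 0 < β) (hγ : 0 < γ) (hδ : 0 < δ)
    (V1 : α*(x1+x2+x3) = -β) (V2 : α*(x1*x2+x1*x3+x2*x3) = γ) (V3 : α*(x1*x2*x3) = -δ)
    (r1 : α*x1^3+β*x1^2+γ*x1+δ = 0) (r2 : α*x2^3+β*x2^2+γ*x2+δ = 0)
    (r3 : α*x3^3+β*x3^2+γ*x3+δ = 0) : β*γ > 4*α*δ := by
  have h1 : x1 < 0 := by
    by_contra hh; push_neg at hh
    nlinarith [mul_nonneg hα.le (pow_nonneg hh 3), mul_nonneg hβ.le (pow_nonneg hh 2), mul_nonneg hγ.le hh]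
  have h2 : x2 < 0 := by
    by_contra hh; push_neg at hh
    nlinarith [mul_nonneg hα.le (pow_nonneg hh 3), mul_nonneg hβ.le (pow_nonneg hh 2), mul_nonneg hγ.le hh]
  have h3 : x3 < 0 := by
    by_contra hh; push_neg at hh
    nlinarith [mul_nonneg hα.le (pow_nonneg hh 3), mul_nonneg hβ.le (pow_nonneg hh 2), mul_nonneg hγ.le hh]
  have hβ' : β = -(α*(x1+x2+x3)) := by linarith
  have hγ' : γ = α*(x1*x2+x1*x3+x2*x3) := V2.symm
  have hδ' : δ = -(α*(x1*x2*x3)) := by linarith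
  rw [hβ', hγ', hδ']
  have key : (x1+x2+x3)*(x1*x2+x1*x3+x2*x3) < 4*(x1*x2*x3) := by
    nlinarith [mul_nonneg (by linarith : (0:ℝ) ≤ -x2) (sq_nonneg (x1 - x3)),
      mul_pos (mul_pos (by linarith : (0:ℝ) < -x1) (by linarith : (0:ℝ) < -x2)) (by linarith : (0:ℝ) < -x3),
      mul_nonneg (mul_nonneg (by linarith : (0:ℝ) ≤ -x1) (by linarith : (0:ℝ) ≤ -x1)) (by linarith : (0:ℝ) ≤ -x3),
      mul_nonneg (mul_nonneg (by linarith : (0:ℝ) ≤ -x2) (by linarith : (0:ℝ) ≤ -x2)) (by linarith : (0:ℝ) ≤ -x1),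
      mul_nonneg (mul_nonneg (by linarith : (0:ℝ) ≤ -x2) (by linarith : (0:ℝ) ≤ -x2)) (by linarith : (0:ℝ) ≤ -x3),
      mul_nonneg (mul_nonneg (by linarith : (0:ℝ) ≤ -x3) (by linarith : (0:ℝ) ≤ -x3)) (by linarith : (0:ℝ) ≤ -x1)]
  nlinarith [mul_pos (mul_pos hα hα) (by linarith : (0:ℝ) < 4*(x1*x2*x3) - (x1+x2+x3)*(x1*x2+x1*x3+x2*x3))]

lemma pair_complex (α β γ δ : ℝ) (hα : 0 < α) (hβ : 0 < β) (hγ : 0 < γ) (hδ : 0 < δ)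
    (a c : ℂ)
    (V1 : (α:ℂ) * (a + (starRingEnd ℂ) a + c) = -(β:ℂ))
    (V2 : (α:ℂ) * (a * (starRingEnd ℂ) a + a*c + (starRingEnd ℂ) a * c) = (γ:ℂ))
    (V3 : (α:ℂ) * (a * (starRingEnd ℂ) a * c) = -(δ:ℂ))
    (hc : c.im = 0) (hcone : a.im^2 < 3*a.re^2) : β*γ > 4*α*δ := by
  apply pair_real α β γ δ a.re a.im c.re hα hβ hγ hδ _ _ _ hcone
  · have h := congrArg Complex.re V1
    simp [Complex.add_re, Complex.mul_re, Complex.mul_im, Complex.conj_re, Complex.conj_im] at h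
    linarith [h]
  · have h := congrArg Complex.re V2
    simp [Complex.add_re, Complex.mul_re, Complex.mul_im, Complex.conj_re, Complex.conj_im, hc] at h
    nlinarith [h]
  · have h := congrArg Complex.re V3
    simp [Complex.add_re, Complex.mul_re, Complex.mul_im, Complex.conj_re, Complex.conj_im, hc] at h
    nlinarith [h]

lemma cubic_ineq (α β γ δ : ℝ) (hα : 0 < α) (hβ : 0 < β) (hγ : 0 < γ) (hδ : 0 < δ)
    (h : ∀ z : ℂ, (α:ℂ)*z^3+(β:ℂ)*z^2+(γ:ℂ)*z+(δ:ℂ) = 0 → z.im^2 < 3*z.re^2) :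
    β*γ > 4*α*δ := by
  set f : Polynomial ℂ := C (α:ℂ) * X^3 + C (β:ℂ) * X^2 + C (γ:ℂ) * X + C (δ:ℂ) with hf
  have hα' : (α:ℂ) ≠ 0 := by exact_mod_cast hα.ne'
  have hdeg : f.natDegree = 3 := by
    rw [hf]; compute_degree!
    exact_mod_cast hα.ne'
  have hf0 : f ≠ 0 := fun hh => by simp [hh] at hdeg
  have hlead : f.leadingCoeff = (α:ℂ) := by
    rw [Polynomial.leadingCoeff, hdeg, hf]
    simp [coeff_add, coeff_C_mul, coeff_X_pow, coeff_C]
  have hsplits : f.Splits := IsAlgClosed.splits f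
  have hcard : f.roots.card = 3 := by
    rw [(Polynomial.splits_iff_card_roots).mp hsplits, hdeg]
  obtain ⟨a, b, c, habc⟩ := Multiset.card_eq_three.mp hcard
  have hfact := Polynomial.Splits.eq_prod_roots hsplits
  rw [hlead, habc] at hfact
  have heval : ∀ z : ℂ, (α:ℂ)*z^3+(β:ℂ)*z^2+(γ:ℂ)*z+(δ:ℂ) = (α:ℂ)*(z-a)*(z-b)*(z-c) := by
    intro z
    have := congrArg (Polynomial.eval z) hfact
    simp [hf, Multiset.map_cons, Multiset.map_singleton, Multiset.prod_cons,
      Multiset.prod_singleton] at this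
    rw [this]; ring
  -- Vieta
  have V1 : (α:ℂ)*(a+b+c) = -(β:ℂ) := by linear_combination (heval 1 + heval (-1))/2 - heval 0
  have V2 : (α:ℂ)*(a*b+a*c+b*c) = (γ:ℂ) := by linear_combination (heval (-1) - heval 1)/2
  have V3 : (α:ℂ)*(a*b*c) = -(δ:ℂ) := by linear_combination heval 0
  -- roots are functional zeros
  have hroot : ∀ z ∈ ({a, b, c} : Multiset ℂ), (α:ℂ)*z^3+(β:ℂ)*z^2+(γ:ℂ)*z+(δ:ℂ) = 0 := by
    intro z hz
    rw [heval z]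
    rcases Multiset.mem_cons.mp hz with rfl | hz
    · ring
    rcases Multiset.mem_cons.mp hz with rfl | hz
    · ring
    rw [Multiset.mem_singleton.mp hz]; ring
  have hconj : ∀ z : ℂ, (α:ℂ)*z^3+(β:ℂ)*z^2+(γ:ℂ)*z+(δ:ℂ) = 0 →
      (starRingEnd ℂ) z ∈ ({a, b, c} : Multiset ℂ) := by
    intro z hz
    rw [← habc]
    rw [Polynomial.mem_roots hf0]
    have hc : (starRingEnd ℂ) ((α:ℂ)*z^3+(β:ℂ)*z^2+(γ:ℂ)*z+(δ:ℂ)) = 0 := by rw [hz]; simp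
    simp only [map_add, map_mul, map_pow, Complex.conj_ofReal] at hc
    rw [Polynomial.IsRoot]
    simp only [hf, Polynomial.eval_add, Polynomial.eval_mul, Polynomial.eval_pow,
      Polynomial.eval_C, Polynomial.eval_X]
    exact hc
  
  have ha0 := hroot a (by simp)
  have hb0 := hroot b (by simp)
  have hc0 := hroot c (by simp)
  have hacone := h a ha0
  have hbcone := h b hb0
  have hccone := h c hc0
  have hsum : a.im + b.im + c.im = 0 := by
    have h1 := congrArg Complex.im V1
    simp only [Complex.mul_im, Complex.ofReal_re, Complex.ofReal_im, Complex.add_im,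
      Complex.neg_im, zero_mul, add_zero, mul_zero, neg_zero] at h1
    have h2 : α * (a.im + b.im + c.im) = 0 := by linarith [h1]
    rcases mul_eq_zero.mp h2 with h3 | h3
    · exact absurd h3 hα.ne'
    · exact h3
  by_cases haim : a.im = 0
  · by_cases hbim : b.im = 0
    · by_cases hcim : c.im = 0
      · -- all real
        have ha' : a = (a.re : ℂ) := by rw [← Complex.re_add_im a, haim]; simp
        have hb' : b = (b.re : ℂ) := by rw [← Complex.re_add_im b, hbim]; simp
        have hc' : c = (c.re : ℂ) := by rw [← Complex.re_add_im c, hcim]; simp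
        rw [ha'] at V1 V2 V3 ha0
        rw [hb'] at V1 V2 V3 hb0
        rw [hc'] at V1 V2 V3 hc0
        exact triple_real α β γ δ a.re b.re c.re hα hβ hγ hδ
          (by exact_mod_cast V1) (by exact_mod_cast V2) (by exact_mod_cast V3)
          (by exact_mod_cast ha0) (by exact_mod_cast hb0) (by exact_mod_cast hc0)
      · -- c non-real, a b real : impossible
        exfalso; apply hcim; linarith [hsum, haim, hbim]
    · -- b non-real
      rcases Multiset.mem_cons.mp (hconj b hb0) with hcb | hm
      · -- conj b = a, but a real: contradiction
        exfalso
        have := congrArg Complex.im hcb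
        simp only [Complex.conj_im] at this
        exact hbim (by linarith [haim])
      · rcases Multiset.mem_cons.mp hm with hcb | hm2
        · -- conj b = b : contradiction
          exfalso
          have := congrArg Complex.im hcb
          simp only [Complex.conj_im] at this
          exact hbim (by linarith)
        · -- conj b = c : pair (b, conj b), third root a real
          have hcb := Multiset.mem_singleton.mp hm2
          rw [← hcb] at V1 V2 V3
          exact pair_complex α β γ δ hα hβ hγ hδ b a
            (by linear_combination V1) (by linear_combination V2) (by linear_combination V3)
            haim hbcone
  · -- a non-real
    rcases Multiset.mem_cons.mp (hconj a ha0) with hca | hm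
    · -- conj a = a : contradiction
      exfalso
      have := congrArg Complex.im hca
      simp only [Complex.conj_im] at this
      exact haim (by linarith)
    · rcases Multiset.mem_cons.mp hm with hca | hm2
      · -- conj a = b, third root c real
        have hcim : c.im = 0 := by
          have := congrArg Complex.im hca
          simp only [Complex.conj_im] at this
          linarith [hsum]
        rw [← hca] at V1 V2 V3
        exact pair_complex α β γ δ hα hβ hγ hδ a c
          (by linear_combination V1) (by linear_combination V2) (by linear_combination V3)
          hcim hacone
      · -- conj a = c, third root b real
        have hca := Multiset.mem_singleton.mp hm2
        have hbim : b.im = 0 := by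
          have := congrArg Complex.im hca
          simp only [Complex.conj_im] at this
          linarith [hsum]
        rw [← hca] at V1 V2 V3
        exact pair_complex α β γ δ hα hβ hγ hδ a b
          (by linear_combination V1) (by linear_combination V2) (by linear_combination V3)
          hbim hacone


theorem stmt_1 (p q r s : ℝ) (hp : 0 < p) (hq : 0 < q) (hr : 0 < r) (hs : 0 < s) :
    ∃ z : ℂ,
      ((p : ℂ) * z ^ 3 + 2 * (q : ℂ) * z ^ 2 + 2 * (r : ℂ) * z + (s : ℂ)) *
        ((q : ℂ) * z ^ 3 + 2 * (p : ℂ) * z ^ 2 + 2 * (s : ℂ) * z + (r : ℂ)) = 0 ∧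
      |z.im| ≥ Real.sqrt 3 * |z.re| := by
  by_contra hcon
  push_neg at hcon
  have hsq : ∀ z : ℂ, |z.im| < Real.sqrt 3 * |z.re| → z.im^2 < 3*z.re^2 := by
    intro z hz
    have h1 := mul_self_lt_mul_self (abs_nonneg z.im) hz
    have h2 : Real.sqrt 3 * Real.sqrt 3 = 3 := Real.mul_self_sqrt (by norm_num)
    calc z.im^2 = |z.im| * |z.im| := by rw [abs_mul_abs_self]; ring
    _ < (Real.sqrt 3 * |z.re|) * (Real.sqrt 3 * |z.re|) := h1
    _ = 3 * z.re^2 := by rw [show (Real.sqrt 3 * |z.re|) * (Real.sqrt 3 * |z.re|)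
          = (Real.sqrt 3 * Real.sqrt 3) * (|z.re| * |z.re|) by ring, h2, abs_mul_abs_self]; ring
  have hP : (2*q)*(2*r) > 4*p*s := by
    apply cubic_ineq p (2*q) (2*r) s hp (by linarith) (by linarith) hs
    intro z hz
    apply hsq z
    apply hcon z
    have : ((p : ℂ) * z ^ 3 + 2 * (q : ℂ) * z ^ 2 + 2 * (r : ℂ) * z + (s : ℂ)) = 0 := by
      rw [← hz]; push_cast; ring
    rw [this, zero_mul]
  have hQ : (2*p)*(2*s) > 4*q*r := by
    apply cubic_ineq q (2*p) (2*s) r hq (by linarith) (by linarith) hr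
    intro z hz
    apply hsq z
    apply hcon z
    have : ((q : ℂ) * z ^ 3 + 2 * (p : ℂ) * z ^ 2 + 2 * (s : ℂ) * z + (r : ℂ)) = 0 := by
      rw [← hz]; push_cast; ring
    rw [this, mul_zero]
  nlinarith [hP, hQ]
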